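/- Suppose the inf-sup condition holds: there is a constant c > 0 such that for every nonzero v ∈ U, the supremum over w ∈ Z with T*w ≠ 0 of |⟨v, T*w⟩| / ‖T*w‖ is at least c‖v‖. Then the spectral equivalence holds: c²‖v‖² ≤ ⟨P v, v⟩ ≤ ‖v‖² for all v ∈ U. In particular, the bilinear form (u, v) ↦ ⟨P u, v⟩ is nondegenerate on U. -/
import Mathlib


open scoped RealInnerProductSpace

/-- The inf-sup condition implies the spectral equivalence
`c²‖v‖² ≤ ⟪P v, v⟫ ≤ ‖v‖²` on `U`; in particular the form `⟪P·,·⟫` is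
nondegenerate on `U`. -/
theorem infsup_implies_spectral_equivalence
    {H : Type*} [NormedAddCommGroup H] [InnerProductSpace ℝ H] [CompleteSpace H]
    (T : H →ₗ.[ℝ] H) (hdense : Dense (T.domain : Set H)) (hclosed : T.IsClosed)
    (Z : Submodule ℝ T.adjoint.domain) [FiniteDimensional ℝ Z]
    (W : Submodule ℝ H) (hW : W = Z.map T.adjoint.toFun)
    (P : H →ₗ[ℝ] H) (hPmem : ∀ q : H, P q ∈ W)
    (hPorth : ∀ q : H, ∀ w ∈ W, ⟪q - P q, w⟫ = 0)
    (U : Submodule ℝ H) [FiniteDimensional ℝ U]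
    (c : ℝ) (hc : 0 < c)
    (hinfsup : ∀ v ∈ U, v ≠ 0 →
      c * ‖v‖ ≤ sSup {r : ℝ | ∃ w : T.adjoint.domain, w ∈ Z ∧ T.adjoint w ≠ 0 ∧
        r = |⟪v, T.adjoint w⟫| / ‖T.adjoint w‖}) :
    (∀ v ∈ U, c ^ 2 * ‖v‖ ^ 2 ≤ ⟪P v, v⟫ ∧ ⟪P v, v⟫ ≤ ‖v‖ ^ 2) ∧
    (∀ v ∈ U, (∀ u ∈ U, ⟪P v, u⟫ = 0) → v = 0) := by
  -- key identity: ⟪P v, v⟫ = ‖P v‖ ^ 2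
  have hkey : ∀ v : H, ⟪P v, v⟫ = ‖P v‖ ^ 2 := by
    intro v
    have h0 : ⟪v - P v, P v⟫ = 0 := hPorth v (P v) (hPmem v)
    rw [inner_sub_left] at h0
    have : ⟪v, P v⟫ = ⟪P v, P v⟫ := by linarith
    rw [real_inner_comm, this, real_inner_self_eq_norm_sq]
  have hmain : ∀ v ∈ U, c ^ 2 * ‖v‖ ^ 2 ≤ ⟪P v, v⟫ ∧ ⟪P v, v⟫ ≤ ‖v‖ ^ 2 := by
    intro v hv
    constructor
    · rcases eq_or_ne v 0 with rfl | hv0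
      · simp
      · -- show c * ‖v‖ ≤ ‖P v‖
        have hsup := hinfsup v hv hv0
        have hbd : sSup {r : ℝ | ∃ w : T.adjoint.domain, w ∈ Z ∧ T.adjoint w ≠ 0 ∧
            r = |⟪v, T.adjoint w⟫| / ‖T.adjoint w‖} ≤ ‖P v‖ := by
          apply Real.sSup_le
          · rintro r ⟨w, hwZ, hw0, rfl⟩
            have hmem : T.adjoint w ∈ W := by
              rw [hW]; exact ⟨w, hwZ, rfl⟩
            have horth : ⟪v - P v, T.adjoint w⟫ = 0 := hPorth v _ hmem
            rw [inner_sub_left] at horth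
            have heq : ⟪v, T.adjoint w⟫ = ⟪P v, T.adjoint w⟫ := by linarith
            rw [heq, div_le_iff₀ (norm_pos_iff.mpr hw0)]
            exact abs_real_inner_le_norm _ _
          · exact norm_nonneg _
        have h1 : c * ‖v‖ ≤ ‖P v‖ := le_trans hsup hbd
        rw [hkey]
        calc c ^ 2 * ‖v‖ ^ 2 = (c * ‖v‖) ^ 2 := by ring
          _ ≤ ‖P v‖ ^ 2 := by
              apply pow_le_pow_left₀ (by positivity) h1
    · rw [hkey]
      have hcs : ‖P v‖ ^ 2 = ⟪P v, v⟫ := (hkey v).symm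
      have : ⟪P v, v⟫ ≤ ‖P v‖ * ‖v‖ := real_inner_le_norm _ _
      nlinarith [norm_nonneg (P v), norm_nonneg v, hkey v, sq_nonneg (‖P v‖ - ‖v‖)]
  refine ⟨hmain, ?_⟩
  intro v hv h0
  have h1 := (hmain v hv).1
  rw [h0 v hv] at h1
  have : ‖v‖ ^ 2 ≤ 0 := by nlinarith [pow_pos hc 2]
  have : ‖v‖ = 0 := by nlinarith [norm_nonneg v, sq_nonneg ‖v‖]
  exact norm_eq_zero.mp this
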